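/- Let (X,G) be a CR-dynamical system such that X has an isolated point. If trans_2(G) ≠ ∅, then trans_2(G) contains an isolated point of X. -/

import Mathlib

/-- A trajectory of `x` in the CR-dynamical system `(X, G)`:
a sequence `(x₁, x₂, x₃, …)` (indexed here from `0`) with `x₁ = x` and
`(xᵢ, xᵢ₊₁) ∈ G` for every `i`. -/
def IsTraj {X : Type*} (G : Set (X × X)) (x : X) (s : ℕ → X) : Prop :=
  s 0 = x ∧ ∀ n : ℕ, (s n, s (n + 1)) ∈ G

/-- `RelImg G n A` is `G^n(A)`: all `y` such that for some `x ∈ A` there are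
`x₁, …, x_{n+1}` with `x₁ = x`, `x_{n+1} = y` and `(xᵢ, xᵢ₊₁) ∈ G` for each `i ≤ n`.
For `n = 0` this gives `A` itself. -/
def RelImg {X : Type*} (G : Set (X × X)) (n : ℕ) (A : Set X) : Set X :=
  {y | ∃ x ∈ A, ∃ f : ℕ → X, f 0 = x ∧ f n = y ∧ ∀ i < n, (f i, f (i + 1)) ∈ G}

/-- The inverse relation `G⁻¹ = {(y, x) | (x, y) ∈ G}`. -/
def RelInv {X : Type*} (G : Set (X × X)) : Set (X × X) := Prod.swap ⁻¹' G

/-- `x` is a legal point of `(X, G)`: it has at least one trajectory. -/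
def Legal {X : Type*} (G : Set (X × X)) (x : X) : Prop := ∃ s : ℕ → X, IsTraj G x s

/-- `U_G^⊕(x)`: the union of the forward orbits of all trajectories of `x`. -/
def UOrb {X : Type*} (G : Set (X × X)) (x : X) : Set X :=
  ⋃ s ∈ {s : ℕ → X | IsTraj G x s}, Set.range s

/-- The set of 1-transitive points: legal points all of whose trajectories have
dense forward orbit. -/
def Trans1 {X : Type*} [MetricSpace X] (G : Set (X × X)) : Set X :=
  {x | Legal G x ∧ ∀ s : ℕ → X, IsTraj G x s → Dense (Set.range s)}

/-- The set of 2-transitive points: points having a trajectory with dense forward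
orbit. -/
def Trans2 {X : Type*} [MetricSpace X] (G : Set (X × X)) : Set X :=
  {x | ∃ s : ℕ → X, IsTraj G x s ∧ Dense (Set.range s)}

/-- The set of 3-transitive points: legal points `x` with `U_G^⊕(x)` dense. -/
def Trans3 {X : Type*} [MetricSpace X] (G : Set (X × X)) : Set X :=
  {x | Legal G x ∧ Dense (UOrb G x)}

/-- The set of intransitive points: legal points that are not 3-transitive. -/
def Intrans {X : Type*} [MetricSpace X] (G : Set (X × X)) : Set X :=
  {x | Legal G x ∧ ¬ Dense (UOrb G x)}

/-- `(X, G)` is transitive: for all nonempty open `U, V` there is `n ≥ 0` with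
`G^n(U) ∩ V ≠ ∅`. -/
def CRTransitive {X : Type*} [MetricSpace X] (G : Set (X × X)) : Prop :=
  ∀ U V : Set X, IsOpen U → U.Nonempty → IsOpen V → V.Nonempty →
    ∃ n : ℕ, (RelImg G n U ∩ V).Nonempty

/-- `(X, G)` is +transitive: for all nonempty open `U, V` there is `n ≥ 1` with
`G^n(U) ∩ V ≠ ∅`. -/
def CRPlusTransitive {X : Type*} [MetricSpace X] (G : Set (X × X)) : Prop :=
  ∀ U V : Set X, IsOpen U → U.Nonempty → IsOpen V → V.Nonempty →
    ∃ n : ℕ, 0 < n ∧ (RelImg G n U ∩ V).Nonempty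

/-- If `X` has an isolated point and `trans₂(G) ≠ ∅`, then `trans₂(G)` contains an
isolated point of `X`. -/
theorem stmt5 {X : Type*} [MetricSpace X] [CompactSpace X] [Nonempty X]
    (G : Set (X × X)) (hGc : IsClosed G) (hGne : G.Nonempty)
    (hiso : ∃ x : X, IsOpen ({x} : Set X))
    (h : (Trans2 G).Nonempty) :
    ∃ x ∈ Trans2 G, IsOpen ({x} : Set X) := by
  obtain ⟨y, s, hs, hd⟩ := h
  obtain ⟨x₀, hx₀⟩ := hiso
  -- the dense orbit hits the open singleton {x₀}
  have hhit : ∃ i, IsOpen ({s i} : Set X) := by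
    obtain ⟨z, hz1, i, rfl⟩ := hd.inter_open_nonempty {x₀} hx₀ ⟨x₀, rfl⟩
    exact ⟨i, hz1 ▸ hx₀⟩
  classical
  let n := Nat.find hhit
  have hn : IsOpen ({s n} : Set X) := Nat.find_spec hhit
  have hmin : ∀ i < n, ¬ IsOpen ({s i} : Set X) := fun i hi => Nat.find_min hhit hi
  set t : ℕ → X := fun k => s (k + n) with ht
  have htraj : IsTraj G (s n) t := ⟨by simp [ht], fun k => by
    simpa [ht, Nat.add_right_comm k n 1] using hs.2 (k + n)⟩
  refine ⟨s n, ⟨t, htraj, ?_⟩, hn⟩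
  -- the tail is dense
  intro p
  by_cases hp : IsOpen ({p} : Set X)
  · -- p is isolated, so p = s i for some i, and i ≥ n by minimality
    obtain ⟨z, hz1, i, rfl⟩ := hd.inter_open_nonempty {p} hp ⟨p, rfl⟩
    have hi : n ≤ i := le_of_not_gt fun hlt => hmin i hlt (hz1 ▸ hp)
    have : s i ∈ Set.range t := ⟨i - n, by simp [ht, Nat.sub_add_cancel hi]⟩
    exact hz1 ▸ subset_closure this
  · -- p is not isolated
    rw [mem_closure_iff]
    intro o ho hpo
    set F : Set X := s '' Set.Iio n with hF
    have hFfin : F.Finite := (Set.finite_Iio n).image s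
    have hU : IsOpen (o \ F) := ho.sdiff hFfin.isClosed
    have hUne : (o \ F).Nonempty := by
      by_contra hemp
      rw [Set.not_nonempty_iff_eq_empty, Set.diff_eq_empty] at hemp
      -- then o ⊆ F, so {p} would be open
      apply hp
      have h1 : IsOpen (o \ (F \ {p})) := ho.sdiff (hFfin.diff).isClosed
      have h2 : o \ (F \ {p}) = {p} := by
        apply Set.eq_singleton_iff_unique_mem.mpr
        constructor
        · exact ⟨hpo, fun hf => hf.2 rfl⟩
        · rintro q ⟨hq1, hq2⟩
          by_contra hq3
          exact hq2 ⟨hemp hq1, hq3⟩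
      exact h2 ▸ h1
    obtain ⟨z, hz1, i, rfl⟩ := hd.inter_open_nonempty _ hU hUne
    have hi : n ≤ i := le_of_not_gt fun hlt => hz1.2 ⟨i, hlt, rfl⟩
    exact ⟨s i, hz1.1, ⟨i - n, by simp [ht, Nat.sub_add_cancel hi]⟩⟩
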